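/- Let p be a prime with p ≥ 5 and let q ≥ 2 be an integer coprime to p whose residue class generates the unit group (ℤ/p²ℤ)ˣ. Then for every k ≥ 1, setting s = (p−1)·k, the p-adic valuation of q^s − 1 equals the p-adic valuation of the denominator (in lowest terms) of the rational number B_s/(2s), where B_s is the s-th Bernoulli number. -/

import Mathlib

open Finset
-- Faulhaber rearranged
lemma bern_identity (p n : ℕ) :
    (p : ℚ) * bernoulli n =
      (∑ i ∈ range p, (i : ℚ) ^ n) -
        ∑ j ∈ range n, bernoulli (n - (j+1)) * ((n.choose (j+1) : ℚ)) *
          ((p : ℚ) ^ (j+2) / (j+2)) := by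
  have h := sum_range_pow p n
  rw [← Finset.sum_range_reflect
    (fun i => bernoulli i * (((n+1).choose i : ℕ) : ℚ) * (p:ℚ) ^ (n + 1 - i) / ((n:ℚ)+1)) (n+1)] at h
  have hterm : ∀ j ∈ range (n+1),
      bernoulli (n + 1 - 1 - j) * ((n+1).choose (n + 1 - 1 - j) : ℚ) *
        ((p:ℚ)) ^ (n + 1 - (n + 1 - 1 - j)) / ((n:ℚ)+1) =
      bernoulli (n - j) * ((n.choose j : ℚ)) * ((p:ℚ) ^ (j+1) / ((j:ℚ)+1)) := by
    intro j hj
    rw [mem_range] at hj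
    have hjn : j ≤ n := Nat.lt_succ_iff.mp hj
    have h1 : n + 1 - 1 - j = n - j := by omega
    have h2 : n + 1 - (n - j) = j + 1 := by omega
    have h3n : (n+1).choose (n - j) = (n+1).choose (j+1) := by
      rw [← Nat.choose_symm (by omega : j + 1 ≤ n + 1)]
      congr 1
      omega
    have h3 : (((n+1).choose (n - j) : ℕ) : ℚ) = (((n+1).choose (j+1) : ℕ) : ℚ) := by
      exact congrArg _ h3n
    have h4 : ((n:ℚ)+1) * ((n.choose j : ℕ) : ℚ)
        = (((n+1).choose (j+1) : ℕ) : ℚ) * ((j:ℚ)+1) := by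
      exact_mod_cast congrArg (Nat.cast : ℕ → ℚ) (Nat.add_one_mul_choose_eq n j)
    rw [h1, h2, h3]
    have hn1 : ((n:ℚ)+1) ≠ 0 := by positivity
    have hj1 : ((j:ℚ)+1) ≠ 0 := by positivity
    have h5 : (((n+1).choose (j+1) : ℕ) : ℚ) / ((n:ℚ)+1)
        = ((n.choose j : ℕ) : ℚ) / ((j:ℚ)+1) := by
      rw [div_eq_div_iff hn1 hj1]
      linear_combination -h4
    calc bernoulli (n - j) * (((n+1).choose (j+1) : ℕ) : ℚ) * (p:ℚ) ^ (j+1) / ((n:ℚ)+1)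
        = ((((n+1).choose (j+1) : ℕ) : ℚ) / ((n:ℚ)+1)) * (bernoulli (n-j) * (p:ℚ)^(j+1)) := by
          ring
      _ = (((n.choose j : ℕ) : ℚ) / ((j:ℚ)+1)) * (bernoulli (n-j) * (p:ℚ)^(j+1)) := by rw [h5]
      _ = bernoulli (n - j) * ((n.choose j : ℕ) : ℚ) * ((p:ℚ) ^ (j+1) / ((j:ℚ)+1)) := by ring
  rw [Finset.sum_congr rfl hterm, Finset.sum_range_succ'] at h
  push_cast at h
  simp only [Nat.sub_zero, Nat.choose_zero_right, Nat.cast_one, pow_one, Nat.cast_zero,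
    zero_add, div_one, mul_one, one_mul] at h
  have hsum : ∀ j ∈ range n,
      bernoulli (n - (j+1)) * ((n.choose (j+1) : ℕ) : ℚ) * ((p:ℚ) ^ (j+1+1) / ((j:ℚ)+1+1)) =
      bernoulli (n - (j+1)) * ((n.choose (j+1) : ℕ) : ℚ) * ((p:ℚ) ^ (j+2) / ((j:ℚ)+2)) := by
    intro j _
    have : (j:ℚ)+1+1 = (j:ℚ)+2 := by ring
    rw [this]
  rw [Finset.sum_congr rfl hsum] at h
  linear_combination -h


lemma helper1 (p : ℕ) [hp : Fact p.Prime] (hp5 : 5 ≤ p) {j : ℕ} (hj : 1 ≤ j) :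
    padicNorm p ((p:ℚ)^j / ((j:ℚ)+1)) ≤ (p:ℚ)⁻¹ := by
  have hp1 : 1 < p := hp.out.one_lt
  have hpq : (1:ℚ) ≤ (p:ℚ) := by exact_mod_cast hp1.le
  have hppos : (p:ℚ) ≠ 0 := by positivity
  have hj1 : ((j:ℚ)+1) ≠ 0 := by positivity
  have hx : (p:ℚ)^j / ((j:ℚ)+1) ≠ 0 := by positivity
  have hvj : padicValNat p (j+1) < j := by
    by_contra hcon
    push_neg at hcon
    have h1 : p ^ padicValNat p (j+1) ∣ (j+1) := pow_padicValNat_dvd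
    have h2 : p ^ padicValNat p (j+1) ≤ j + 1 := Nat.le_of_dvd (by omega) h1
    have h3 : j < 2 ^ j := Nat.lt_two_pow_self
    have h4 : 2 ^ j < p ^ j := Nat.pow_lt_pow_left (by omega) (by omega)
    have h5 : p ^ j ≤ p ^ padicValNat p (j+1) := Nat.pow_le_pow_right (by omega) hcon
    omega
  have hcast : ((j:ℚ)+1) = ((j+1 : ℕ) : ℚ) := by push_cast; ring
  have hval : padicValRat p ((p:ℚ)^j / ((j:ℚ)+1))
      = (j:ℤ) - padicValNat p (j+1) := by
    rw [hcast, padicValRat.div (pow_ne_zero _ hppos) (by rw [← hcast]; exact hj1),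
      padicValRat.pow (p:ℚ), padicValRat.self hp1, mul_one, padicValRat.of_nat]
  rw [padicNorm.eq_zpow_of_nonzero hx, hval]
  have : (p:ℚ)⁻¹ = (p:ℚ) ^ (-1 : ℤ) := by rw [zpow_neg_one]
  rw [this]
  apply zpow_le_zpow_right₀ hpq
  omega

lemma term_norm_le (p : ℕ) [hp : Fact p.Prime] (hp5 : 5 ≤ p) (n j : ℕ)
    (hB : padicNorm p ((p:ℚ) * bernoulli (n - (j+1))) ≤ 1) :
    padicNorm p (bernoulli (n - (j+1)) * ((n.choose (j+1) : ℕ) : ℚ) *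
      ((p : ℚ) ^ (j+2) / ((j:ℚ)+2))) ≤ (p:ℚ)⁻¹ := by
  have hrw : bernoulli (n-(j+1)) * ((n.choose (j+1) : ℕ):ℚ) * ((p:ℚ)^(j+2)/((j:ℚ)+2))
      = ((p:ℚ) * bernoulli (n-(j+1))) * (((n.choose (j+1) : ℕ):ℚ) *
        ((p:ℚ)^(j+1)/(((j+1 : ℕ):ℚ)+1))) := by
    push_cast
    ring
  rw [hrw, padicNorm.mul ((p:ℚ) * bernoulli (n-(j+1))) _,
    padicNorm.mul ((n.choose (j+1) : ℕ):ℚ) _]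
  have h2 : padicNorm p ((n.choose (j+1) : ℕ):ℚ) ≤ 1 := padicNorm.of_nat _
  have h3 : padicNorm p ((p:ℚ)^(j+1)/(((j+1 : ℕ):ℚ)+1)) ≤ (p:ℚ)⁻¹ :=
    helper1 p hp5 (by omega)
  have hinv : (0:ℚ) ≤ (p:ℚ)⁻¹ := by positivity
  have step1 : padicNorm p ((n.choose (j+1) : ℕ):ℚ) *
      padicNorm p ((p:ℚ)^(j+1)/(((j+1 : ℕ):ℚ)+1)) ≤ (p:ℚ)⁻¹ := by
    have := mul_le_mul h2 h3 (padicNorm.nonneg _) zero_le_one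
    simpa using this
  have step2 := mul_le_mul hB step1
    (mul_nonneg (padicNorm.nonneg _) (padicNorm.nonneg _)) zero_le_one
  simpa using step2

lemma padicNorm_p_mul_bernoulli_le (p : ℕ) [hp : Fact p.Prime] (hp5 : 5 ≤ p) :
    ∀ n, padicNorm p ((p:ℚ) * bernoulli n) ≤ 1 := by
  intro n
  induction n using Nat.strong_induction_on with
  | _ n IH =>
  rw [bern_identity p n]
  refine le_trans padicNorm.sub (max_le ?_ ?_)
  · have hc : (∑ i ∈ range p, (i:ℚ)^n) = ((∑ i ∈ range p, i^n : ℕ) : ℚ) := by push_cast; rfl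
    rw [hc]
    exact padicNorm.of_nat _
  · have hp0 : 0 < p := hp.out.pos
    have hppos : (0:ℚ) < (p:ℚ) := by exact_mod_cast hp0
    refine le_trans (padicNorm.sum_le' (fun j hj => ?_) ((inv_pos.mpr hppos).le)) ?_
    · exact term_norm_le p hp5 n j (IH (n - (j+1)) (by rw [mem_range] at hj; omega))
    · have h1 : (1:ℚ) ≤ (p:ℚ) := by exact_mod_cast hp.out.one_lt.le
      rw [inv_le_one_iff₀]
      tauto


lemma S_not_dvd (p : ℕ) [hp : Fact p.Prime] {n : ℕ} (hn : n ≠ 0) (hd : (p-1) ∣ n) :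
    ¬ p ∣ ∑ i ∈ range p, i ^ n := by
  have hp1 : 1 < p := hp.out.one_lt
  rw [← ZMod.natCast_eq_zero_iff]
  push_cast
  rw [range_eq_Ico, Finset.sum_eq_sum_Ico_succ_bot (by omega : 0 < p)]
  have hone : ∀ i ∈ Ico (0+1) p, ((i : ZMod p))^n = 1 := by
    intro i hi
    rw [mem_Ico] at hi
    have hne : (i : ZMod p) ≠ 0 := by
      rw [Ne, ZMod.natCast_eq_zero_iff]
      intro hdvd
      have := Nat.le_of_dvd (by omega) hdvd
      omega
    obtain ⟨m, rfl⟩ := hd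
    rw [pow_mul, ZMod.pow_card_sub_one_eq_one hne, one_pow]
  rw [sum_congr rfl hone, Finset.sum_const, Nat.card_Ico]
  simp only [Nat.cast_zero, zero_pow hn, zero_add, nsmul_eq_mul, mul_one]
  have : ((p - 1 - 0 : ℕ) : ZMod p) ≠ 0 := by
    rw [Ne, ZMod.natCast_eq_zero_iff]
    intro hdvd
    have := Nat.le_of_dvd (by omega) hdvd
    omega
  simpa using this

lemma padicNorm_p_mul_bernoulli_eq (p : ℕ) [hp : Fact p.Prime] (hp5 : 5 ≤ p)
    {n : ℕ} (hn : n ≠ 0) (hd : (p-1) ∣ n) :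
    padicNorm p ((p:ℚ) * bernoulli n) = 1 := by
  have hp0 : 0 < p := hp.out.pos
  have hppos : (0:ℚ) < (p:ℚ) := by exact_mod_cast hp0
  have hp1q : (1:ℚ) < (p:ℚ) := by exact_mod_cast hp.out.one_lt
  rw [bern_identity p n]
  have hS : padicNorm p (∑ i ∈ range p, (i:ℚ)^n) = 1 := by
    have hc : (∑ i ∈ range p, (i:ℚ)^n) = ((∑ i ∈ range p, i^n : ℕ) : ℚ) := by push_cast; rfl
    rw [hc]
    exact (padicNorm.nat_eq_one_iff _).mpr (S_not_dvd p hn hd)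
  have hR : padicNorm p (∑ j ∈ range n, bernoulli (n - (j+1)) * ((n.choose (j+1) : ℕ) : ℚ) *
      ((p : ℚ) ^ (j+2) / ((j:ℚ)+2))) ≤ (p:ℚ)⁻¹ :=
    padicNorm.sum_le' (fun j _ => term_norm_le p hp5 n j
      (padicNorm_p_mul_bernoulli_le p hp5 _)) (inv_pos.mpr hppos).le
  have hne : padicNorm p (∑ i ∈ range p, (i:ℚ)^n) ≠
      padicNorm p (-(∑ j ∈ range n, bernoulli (n - (j+1)) * ((n.choose (j+1) : ℕ) : ℚ) *
        ((p : ℚ) ^ (j+2) / ((j:ℚ)+2)))) := by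
    rw [padicNorm.neg, hS]
    intro h
    rw [← h] at hR
    have : (p:ℚ)⁻¹ < 1 := inv_lt_one_of_one_lt₀ hp1q
    linarith
  rw [sub_eq_add_neg, padicNorm.add_eq_max_of_ne hne, padicNorm.neg, hS]
  have h2 : padicNorm p (∑ j ∈ range n, bernoulli (n - (j+1)) * ((n.choose (j+1) : ℕ) : ℚ) *
        ((p : ℚ) ^ (j+2) / ((j:ℚ)+2))) < 1 :=
    lt_of_le_of_lt hR (inv_lt_one_of_one_lt₀ hp1q)
  rw [max_eq_left h2.le]

lemma padicValRat_bernoulli (p : ℕ) [hp : Fact p.Prime] (hp5 : 5 ≤ p)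
    {n : ℕ} (hn : n ≠ 0) (hd : (p-1) ∣ n) :
    bernoulli n ≠ 0 ∧ padicValRat p (bernoulli n) = -1 := by
  have h := padicNorm_p_mul_bernoulli_eq p hp5 hn hd
  have hx : (p:ℚ) * bernoulli n ≠ 0 := by
    intro h0
    rw [h0, padicNorm.zero] at h
    norm_num at h
  have hB : bernoulli n ≠ 0 := by
    intro h0
    rw [h0, mul_zero] at hx
    exact hx rfl
  refine ⟨hB, ?_⟩
  have hppos : (0:ℚ) < (p:ℚ) := by exact_mod_cast hp.out.pos
  have hp1 : (p:ℚ) ≠ 1 := by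
    have := hp.out.one_lt
    exact_mod_cast this.ne'
  have hval0 : padicValRat p ((p:ℚ) * bernoulli n) = 0 := by
    have := padicNorm.eq_zpow_of_nonzero (p := p) hx
    rw [h] at this
    have h1 : (p:ℚ) ^ (0:ℤ) = (p:ℚ) ^ (-padicValRat p ((p:ℚ) * bernoulli n)) := by
      rw [zpow_zero]; exact this
    have := zpow_right_injective₀ hppos hp1 h1
    omega
  rw [padicValRat.mul (by positivity) hB, padicValRat.self hp.out.one_lt] at hval0
  omega

lemma den_val (p : ℕ) [hp : Fact p.Prime] {r : ℚ} {m : ℕ}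
    (h : padicValRat p r = -(1 + (m:ℤ))) : padicValNat p r.den = 1 + m := by
  have hr : r ≠ 0 := by
    intro h0
    rw [h0, padicValRat.zero] at h
    omega
  rw [padicValRat] at h
  simp only [padicValInt] at h
  have hnum : padicValNat p r.num.natAbs = 0 := by
    by_contra hne
    have h1 : 1 ≤ padicValNat p r.num.natAbs := by omega
    have h2 : p ∣ r.num.natAbs := dvd_of_one_le_padicValNat h1
    have h3 : 1 ≤ padicValNat p r.den := by omega
    have h4 : p ∣ r.den := dvd_of_one_le_padicValNat h3
    have h5 := Nat.Coprime.eq_one_of_dvd (Nat.Coprime.coprime_dvd_left h2 r.reduced) h4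
    have := hp.out.one_lt
    omega
  omega

/-- Let `p ≥ 5` be a prime and `q ≥ 2` an integer coprime to `p` whose residue class
generates `(ℤ/p²ℤ)ˣ`. For every `k ≥ 1`, with `s = (p-1)·k`, the `p`-adic valuation of
`q^s - 1` equals the `p`-adic valuation of the denominator (in lowest terms) of
`B_s / (2s)`, where `B_s` is the `s`-th Bernoulli number. -/
theorem padicValNat_pow_sub_one_eq_padicValNat_den_bernoulli_div
    (p q : ℕ) (hp : p.Prime) (hp5 : 5 ≤ p) (hq2 : 2 ≤ q) (hq : Nat.Coprime q p)
    (hgen : Subgroup.zpowers (ZMod.unitOfCoprime q (hq.pow_right 2) : (ZMod (p ^ 2))ˣ) = ⊤) :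
    ∀ k : ℕ, 1 ≤ k →
      padicValNat p (q ^ ((p - 1) * k) - 1) =
        padicValNat p ((bernoulli ((p - 1) * k) / (2 * ((p - 1) * k : ℕ) : ℚ)).den) := by
  haveI : Fact p.Prime := ⟨hp⟩
  intro k hk
  have hpodd : Odd p := hp.odd_of_ne_two (by omega)
  have hqp : ¬ p ∣ q := (Nat.Prime.coprime_iff_not_dvd hp).mp hq.symm
  -- q ≠ 0 mod p
  have hq0 : (q : ZMod p) ≠ 0 := by
    rw [Ne, ZMod.natCast_eq_zero_iff]
    exact hqp
  have hqpow1 : 1 < q ^ (p - 1) := Nat.one_lt_pow (by omega) (by omega)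
  -- Fermat: p ∣ q^(p-1) - 1
  have fermat : p ∣ q ^ (p - 1) - 1 := by
    rw [← ZMod.natCast_eq_zero_iff]
    have hcast : ((q ^ (p - 1) - 1 : ℕ) : ZMod p) = (q : ZMod p) ^ (p - 1) - 1 := by
      push_cast [Nat.cast_sub hqpow1.le]
      ring
    rw [hcast, ZMod.pow_card_sub_one_eq_one hq0, sub_self]
  -- p^2 does not divide q^(p-1) - 1
  have hnsq : ¬ (p ^ 2) ∣ q ^ (p - 1) - 1 := by
    intro hdvd
    haveI : NeZero (p ^ 2) := ⟨by positivity⟩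
    set u : (ZMod (p ^ 2))ˣ := ZMod.unitOfCoprime q (hq.pow_right 2)
    have hord : orderOf u = Fintype.card (ZMod (p ^ 2))ˣ := by
      rw [← Nat.card_eq_fintype_card]
      apply orderOf_eq_card_of_forall_mem_zpowers
      intro x
      rw [hgen]
      exact Subgroup.mem_top x
    have hcard : Fintype.card (ZMod (p ^ 2))ˣ = p * (p - 1) := by
      rw [ZMod.card_units_eq_totient, Nat.totient_prime_pow hp (by norm_num)]
      ring_nf
    have hu1 : u ^ (p - 1) = 1 := by
      ext
      push_cast
      rw [ZMod.coe_unitOfCoprime]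
      have hcast : ((q ^ (p - 1) - 1 : ℕ) : ZMod (p ^ 2)) = (q : ZMod (p ^ 2)) ^ (p - 1) - 1 := by
        push_cast [Nat.cast_sub hqpow1.le]
        ring
      have h0 : ((q ^ (p - 1) - 1 : ℕ) : ZMod (p ^ 2)) = 0 := by
        rw [ZMod.natCast_eq_zero_iff]
        exact hdvd
      rw [hcast] at h0
      have := sub_eq_zero.mp h0
      simpa using this
    have hdvd2 : orderOf u ∣ p - 1 := orderOf_dvd_of_pow_eq_one hu1
    rw [hord, hcard] at hdvd2
    have h1 := Nat.le_of_dvd (by omega) hdvd2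
    have h2 : 5 * (p - 1) ≤ p * (p - 1) := Nat.mul_le_mul_right _ hp5
    omega
  -- valuation of q^(p-1) - 1 is 1
  have hval1 : padicValNat p (q ^ (p - 1) - 1) = 1 := by
    have hle : 1 ≤ padicValNat p (q ^ (p - 1) - 1) :=
      one_le_padicValNat_of_dvd (by omega) fermat
    have hlt : padicValNat p (q ^ (p - 1) - 1) < 2 := by
      by_contra hcon
      push_neg at hcon
      exact hnsq ((padicValNat_dvd_iff_le (by omega)).mpr hcon)
    omega
  -- LTE
  have hlhs : padicValNat p (q ^ ((p - 1) * k) - 1) = 1 + padicValNat p k := by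
    have h := padicValNat.pow_sub_pow (p := p) hpodd (x := q ^ (p - 1)) (y := 1)
      hqpow1 (by simpa using fermat) (by
        intro hdvd
        exact hqp (hp.dvd_of_dvd_pow hdvd)) (by omega : k ≠ 0)
    rw [one_pow, ← pow_mul] at h
    rw [h, hval1]
  -- RHS
  have hn0 : (p - 1) * k ≠ 0 := by
    have := hp.two_le
    exact Nat.mul_ne_zero (by omega) (by omega)
  obtain ⟨hB, hBval⟩ := padicValRat_bernoulli p hp5 hn0 ⟨k, rfl⟩
  have hden0 : (2 * (((p - 1) * k : ℕ) : ℚ)) ≠ 0 := by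
    have : (0:ℚ) < (((p - 1) * k : ℕ) : ℚ) := by exact_mod_cast Nat.pos_of_ne_zero hn0
    positivity
  have hvden : padicValRat p (2 * (((p - 1) * k : ℕ) : ℚ)) = padicValNat p k := by
    have h2 : padicValRat p (2:ℚ) = 0 := by
      have : ((2:ℕ):ℚ) = (2:ℚ) := by norm_num
      rw [← this, padicValRat.of_nat, padicValNat.eq_zero_of_not_dvd (by
        intro h
        have := Nat.le_of_dvd (by norm_num) h
        omega)]
      norm_num
    rw [padicValRat.mul (by norm_num) (by
        exact_mod_cast (Nat.cast_ne_zero (R := ℚ)).mpr hn0), h2, zero_add,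
      padicValRat.of_nat]
    have : padicValNat p ((p-1) * k) = padicValNat p (p-1) + padicValNat p k :=
      padicValNat.mul (by omega) (by omega)
    rw [this, padicValNat.eq_zero_of_not_dvd (by
      intro hdvd
      have := Nat.le_of_dvd (by omega) hdvd
      omega)]
    norm_num
  have hrval : padicValRat p (bernoulli ((p - 1) * k) / (2 * (((p - 1) * k : ℕ)) : ℚ))
      = -(1 + (padicValNat p k : ℤ)) := by
    rw [padicValRat.div hB hden0, hBval, hvden]
    ring
  rw [hlhs, den_val p hrval]
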